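/- The quotient group R := (Q⋊T)/(S⋊L) is isomorphic to the Klein four-group ℤ/2ℤ × ℤ/2ℤ. -/

import Mathlib

open Equiv

namespace CantorPaper

/-- `(ℤ/2ℤ)⁴`, written multiplicatively, as functions `{1,2,3,4} → ℤ/2ℤ`. -/
abbrev V : Type := Fin 4 → Multiplicative (ZMod 2)

/-- The action of the symmetric group on `(ℤ/2ℤ)⁴` by permuting coordinates:
`(τ · q) i = q (τ⁻¹ i)`. -/
def act : Perm (Fin 4) →* MulAut V where
  toFun τ :=
    { toFun := fun q i => q (τ⁻¹ i)
      invFun := fun q i => q (τ i)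
      left_inv := fun q => funext fun i => by simp
      right_inv := fun q => funext fun i => by simp
      map_mul' := fun q r => rfl }
  map_one' := by
    ext q i
    simp
  map_mul' := fun σ τ => by
    ext q i
    simp [Perm.mul_apply]

@[simp] lemma act_apply (τ : Perm (Fin 4)) (q : V) (i : Fin 4) :
    act τ q i = q (τ⁻¹ i) := rfl

/-- `T = ⟨(1 4), (1 2)(3 4)⟩`, the subgroup of the symmetric group on
`{1,2,3,4}` preserving the partition `{{1,4},{2,3}}` (0-indexed). -/
def T : Subgroup (Perm (Fin 4)) :=
  Subgroup.closure {swap 0 3, swap 0 1 * swap 2 3}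

/-- `L = {id, (1 4), (2 3), (1 4)(2 3)}`, the subgroup fixing each block of
the partition `{{1,4},{2,3}}` (0-indexed). -/
def L : Subgroup (Perm (Fin 4)) where
  carrier := {τ | τ = 1 ∨ τ = swap 0 3 ∨ τ = swap 1 2 ∨ τ = swap 0 3 * swap 1 2}
  one_mem' := by left; rfl
  mul_mem' := by
    intro a b ha hb
    simp only [Set.mem_setOf_eq] at ha hb ⊢
    revert ha hb
    revert a b
    decide
  inv_mem' := by
    intro a ha
    simp only [Set.mem_setOf_eq] at ha ⊢
    revert ha
    revert a
    decide

lemma mem_L_iff (τ : Perm (Fin 4)) :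
    τ ∈ L ↔ (τ = 1 ∨ τ = swap 0 3 ∨ τ = swap 1 2 ∨ τ = swap 0 3 * swap 1 2) :=
  Iff.rfl

/-- `Q = {q ∈ (ℤ/2ℤ)⁴ : q 1 + q 2 + q 3 + q 4 = 0}` (multiplicatively,
the product of the coordinates is `1`). -/
def Q : Subgroup V where
  carrier := {q | q 0 * q 1 * q 2 * q 3 = 1}
  one_mem' := by simp
  mul_mem' := by
    intro a b ha hb
    simp only [Set.mem_setOf_eq] at ha hb ⊢
    revert ha hb
    revert a b
    decide
  inv_mem' := by
    intro a ha
    simp only [Set.mem_setOf_eq] at ha ⊢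
    revert ha
    revert a
    decide

lemma mem_Q_iff (q : V) : q ∈ Q ↔ q 0 * q 1 * q 2 * q 3 = 1 := Iff.rfl

/-- `S = {q ∈ (ℤ/2ℤ)⁴ : q 1 = q 4, q 2 = q 3}`. -/
def S : Subgroup V where
  carrier := {q | q 0 = q 3 ∧ q 1 = q 2}
  one_mem' := by exact ⟨rfl, rfl⟩
  mul_mem' := by
    intro a b ha hb
    simp only [Set.mem_setOf_eq] at ha hb ⊢
    revert ha hb
    revert a b
    decide
  inv_mem' := by
    intro a ha
    simp only [Set.mem_setOf_eq] at ha ⊢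
    revert ha
    revert a
    decide

lemma mem_S_iff (q : V) : q ∈ S ↔ (q 0 = q 3 ∧ q 1 = q 2) := Iff.rfl

/-- The action of `T` on `(ℤ/2ℤ)⁴`. -/
def φ : T →* MulAut V := act.comp T.subtype

/-- The semidirect product `(ℤ/2ℤ)⁴ ⋊ T`. -/
abbrev G : Type := V ⋊[φ] T

lemma Q_invariant (τ : Perm (Fin 4)) {q : V} (hq : q ∈ Q) : act τ q ∈ Q := by
  simp only [mem_Q_iff, act_apply] at hq ⊢
  revert hq
  revert q
  revert τ
  decide

lemma S_invariant_L {τ : Perm (Fin 4)} (hτ : τ ∈ L) {q : V} (hq : q ∈ S) :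
    act τ q ∈ S := by
  simp only [mem_L_iff] at hτ
  simp only [mem_S_iff, act_apply] at hq ⊢
  revert hq
  revert q
  revert hτ
  revert τ
  decide

lemma S_invariant_T {τ : Perm (Fin 4)} (hτ : τ ∈ T) :
    ∀ q : V, act τ q ∈ S ↔ q ∈ S := by
  induction hτ using Subgroup.closure_induction with
  | mem x hx =>
      simp only [Set.mem_insert_iff, Set.mem_singleton_iff] at hx
      rcases hx with rfl | rfl <;>
        · intro q
          simp only [mem_S_iff, act_apply]
          revert q
          decide
  | one => intro q; simp [mem_S_iff]
  | mul x y hx hy ihx ihy =>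
      intro q
      rw [map_mul]
      rw [show (act x * act y) q = act x (act y q) from rfl]
      exact (ihx _).trans (ihy q)
  | inv x hx ih =>
      intro q
      have key : ∀ r : V, act x (act x⁻¹ r) = r := by
        intro r
        rw [← MulAut.mul_apply, ← map_mul, mul_inv_cancel, map_one]
        rfl
      constructor
      · intro h
        have := (ih (act x⁻¹ q)).mpr h
        rwa [key] at this
      · intro h
        exact (ih (act x⁻¹ q)).mp (by rwa [key])

/-- The subgroup `Q ⋊ T` of `(ℤ/2ℤ)⁴ ⋊ T`. -/
def QT : Subgroup G where
  carrier := {g | g.left ∈ Q}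
  one_mem' := by
    simp only [Set.mem_setOf_eq, SemidirectProduct.one_left]
    exact Q.one_mem
  mul_mem' := by
    intro a b ha hb
    simp only [Set.mem_setOf_eq, SemidirectProduct.mul_left] at ha hb ⊢
    exact Q.mul_mem ha (Q_invariant _ hb)
  inv_mem' := by
    intro a ha
    simp only [Set.mem_setOf_eq, SemidirectProduct.inv_left] at ha ⊢
    exact Q_invariant _ (Q.inv_mem ha)

lemma mem_QT_iff (g : G) : g ∈ QT ↔ g.left ∈ Q := Iff.rfl

/-- The subgroup `Q ⋊ L` of `(ℤ/2ℤ)⁴ ⋊ T`. -/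
def QL : Subgroup G where
  carrier := {g | g.left ∈ Q ∧ (g.right : Perm (Fin 4)) ∈ L}
  one_mem' := by
    refine ⟨?_, ?_⟩
    · simpa using Q.one_mem
    · simpa using L.one_mem
  mul_mem' := by
    intro a b ha hb
    refine ⟨?_, ?_⟩
    · simp only [SemidirectProduct.mul_left]
      exact Q.mul_mem ha.1 (Q_invariant _ hb.1)
    · simp only [SemidirectProduct.mul_right, Subgroup.coe_mul]
      exact L.mul_mem ha.2 hb.2
  inv_mem' := by
    intro a ha
    refine ⟨?_, ?_⟩
    · simp only [SemidirectProduct.inv_left]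
      exact Q_invariant _ (Q.inv_mem ha.1)
    · simp only [SemidirectProduct.inv_right, InvMemClass.coe_inv]
      exact L.inv_mem ha.2

lemma mem_QL_iff (g : G) :
    g ∈ QL ↔ (g.left ∈ Q ∧ (g.right : Perm (Fin 4)) ∈ L) := Iff.rfl

/-- The subgroup `S ⋊ T` of `(ℤ/2ℤ)⁴ ⋊ T`. -/
def ST : Subgroup G where
  carrier := {g | g.left ∈ S}
  one_mem' := by
    simp only [Set.mem_setOf_eq, SemidirectProduct.one_left]
    exact S.one_mem
  mul_mem' := by
    intro a b ha hb
    simp only [Set.mem_setOf_eq, SemidirectProduct.mul_left] at ha hb ⊢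
    refine S.mul_mem ha ?_
    exact (S_invariant_T (a.right).2 _).mpr hb
  inv_mem' := by
    intro a ha
    simp only [Set.mem_setOf_eq, SemidirectProduct.inv_left] at ha ⊢
    exact (S_invariant_T (a.right⁻¹).2 _).mpr (S.inv_mem ha)

lemma mem_ST_iff (g : G) : g ∈ ST ↔ g.left ∈ S := Iff.rfl

/-- The subgroup `S ⋊ L` of `(ℤ/2ℤ)⁴ ⋊ T`. -/
def SL : Subgroup G where
  carrier := {g | g.left ∈ S ∧ (g.right : Perm (Fin 4)) ∈ L}
  one_mem' := by
    refine ⟨?_, ?_⟩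
    · simpa using S.one_mem
    · simpa using L.one_mem
  mul_mem' := by
    intro a b ha hb
    refine ⟨?_, ?_⟩
    · simp only [SemidirectProduct.mul_left]
      exact S.mul_mem ha.1 (S_invariant_L ha.2 hb.1)
    · simp only [SemidirectProduct.mul_right, Subgroup.coe_mul]
      exact L.mul_mem ha.2 hb.2
  inv_mem' := by
    intro a ha
    refine ⟨?_, ?_⟩
    · simp only [SemidirectProduct.inv_left]
      exact S_invariant_L (L.inv_mem ha.2) (S.inv_mem ha.1)
    · simp only [SemidirectProduct.inv_right, InvMemClass.coe_inv]
      exact L.inv_mem ha.2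

lemma mem_SL_iff (g : G) :
    g ∈ SL ↔ (g.left ∈ S ∧ (g.right : Perm (Fin 4)) ∈ L) := Iff.rfl


/-- Block indicator: 0 for block `{0,3}`, 1 for block `{1,2}`. -/
def blk : Fin 4 → ZMod 2 := ![0, 1, 1, 0]

lemma blk_act {τ : Perm (Fin 4)} (hτ : τ ∈ T) :
    ∀ i, blk (τ i) = blk i + blk (τ 0) := by
  induction hτ using Subgroup.closure_induction with
  | mem x hx =>
      simp only [Set.mem_insert_iff, Set.mem_singleton_iff] at hx
      rcases hx with rfl | rfl <;> decide
  | one => intro i; simp [blk]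
  | mul x y hx hy ihx ihy =>
      intro i
      rw [show (x * y) i = x (y i) from rfl, ihx (y i), ihy i,
        show (x * y) 0 = x (y 0) from rfl, ihx (y 0), ihy 0,
        show blk (0 : Fin 4) = 0 from rfl]
      ring
  | inv x hx ih =>
      intro i
      have h0 := ih (x⁻¹ 0)
      rw [← Perm.mul_apply, mul_inv_cancel, Perm.one_apply] at h0
      have h1 := ih (x⁻¹ i)
      rw [← Perm.mul_apply, mul_inv_cancel, Perm.one_apply] at h1
      have h0' : (0 : ZMod 2) = blk (x⁻¹ 0) + blk (x 0) := h0
      have key : ∀ a b c d : ZMod 2, (0 : ZMod 2) = b + c → a = d + c →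
          d = a + b := by decide
      exact key _ _ _ _ h0' h1

lemma b_inv {τ : Perm (Fin 4)} (hτ : τ ∈ T) :
    ∀ q ∈ Q, (act τ q) 0 * (act τ q) 3 = q 0 * q 3 := by
  induction hτ using Subgroup.closure_induction with
  | mem x hx =>
      simp only [Set.mem_insert_iff, Set.mem_singleton_iff] at hx
      rcases hx with rfl | rfl <;>
        · intro q hq
          simp only [mem_Q_iff] at hq
          simp only [act_apply]
          revert hq; revert q; decide
  | one => intro q _; simp
  | mul x y hx hy ihx ihy =>
      intro q hq
      have hxy : act (x * y) q = act x (act y q) := by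
        rw [map_mul]; rfl
      rw [hxy, ihx _ (Q_invariant y hq), ihy _ hq]
  | inv x hx ih =>
      intro q hq
      have key : act x (act x⁻¹ q) = q := by
        rw [← MulAut.mul_apply, ← map_mul, mul_inv_cancel, map_one]; rfl
      have := ih (act x⁻¹ q) (Q_invariant _ hq)
      rw [key] at this
      exact this.symm

/-- The homomorphism `Q⋊T → ℤ/2 × ℤ/2` sending `(q,τ)` to
`(q 0 + q 3, blk (τ 0))`. -/
def f : QT →* Multiplicative (ZMod 2 × ZMod 2) where
  toFun g := Multiplicative.ofAdd
    (Multiplicative.toAdd ((g : G).left 0 * (g : G).left 3),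
      blk (((g : G).right : Perm (Fin 4)) 0))
  map_one' := by
    simp only [Subgroup.coe_one, SemidirectProduct.one_left,
      SemidirectProduct.one_right]
    rfl
  map_mul' := by
    rintro ⟨a, ha⟩ ⟨b, hb⟩
    have hleft : (a * b).left = a.left * act (a.right : Perm (Fin 4)) b.left := rfl
    have hright : ((a * b).right : Perm (Fin 4)) =
        (a.right : Perm (Fin 4)) * (b.right : Perm (Fin 4)) := rfl
    simp only [Subgroup.coe_mul, hleft, hright, Pi.mul_apply]
    have h1 := b_inv (a.right).2 b.left hb
    have h2 := blk_act (a.right).2 ((b.right : Perm (Fin 4)) 0)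
    rw [show ((a.right : Perm (Fin 4)) * (b.right : Perm (Fin 4))) 0 =
        (a.right : Perm (Fin 4)) ((b.right : Perm (Fin 4)) 0) from rfl, h2]
    have h1' : a.left 0 * act (a.right : Perm (Fin 4)) b.left 0 *
        (a.left 3 * act (a.right : Perm (Fin 4)) b.left 3) =
        a.left 0 * a.left 3 * (b.left 0 * b.left 3) := by
      rw [mul_mul_mul_comm, h1]
    rw [h1']
    simp only [toAdd_mul]
    rw [show blk ((b.right : Perm (Fin 4)) 0) + blk ((a.right : Perm (Fin 4)) 0)
        = blk ((a.right : Perm (Fin 4)) 0) + blk ((b.right : Perm (Fin 4)) 0)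
        from add_comm _ _]
    rfl

lemma L_subset_T {τ : Perm (Fin 4)} (hτ : τ ∈ L) : τ ∈ T := by
  rw [mem_L_iff] at hτ
  have h1 : swap (0 : Fin 4) 3 ∈ T :=
    Subgroup.subset_closure (by left; rfl)
  have h2 : swap (0 : Fin 4) 1 * swap 2 3 ∈ T :=
    Subgroup.subset_closure (by right; rfl)
  have h3 : swap (1 : Fin 4) 2 ∈ T := by
    have : swap (1 : Fin 4) 2 =
        (swap 0 1 * swap 2 3) * swap 0 3 * (swap 0 1 * swap 2 3) *
          swap 0 3 * swap 0 3 := by decide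
    rw [this]
    exact T.mul_mem (T.mul_mem (T.mul_mem (T.mul_mem h2 h1) h2) h1) h1
  rcases hτ with rfl | rfl | rfl | rfl
  · exact T.one_mem
  · exact h1
  · exact h3
  · exact T.mul_mem h1 h3

lemma ker_f : f.ker = SL.subgroupOf QT := by
  ext ⟨g, hg⟩
  simp only [MonoidHom.mem_ker, Subgroup.mem_subgroupOf]
  rw [mem_SL_iff]
  constructor
  · intro hfg
    have hpair : Multiplicative.toAdd (g.left 0 * g.left 3) = 0 ∧
        blk ((g.right : Perm (Fin 4)) 0) = 0 := by
      have := congrArg Multiplicative.toAdd hfg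
      exact Prod.mk.injEq .. ▸ Prod.ext_iff.mp this
    have hq : g.left ∈ Q := hg
    rw [mem_Q_iff] at hq
    have hS : g.left ∈ S := by
      rw [mem_S_iff]
      have h03 : g.left 0 * g.left 3 = 1 := by
        have := hpair.1
        revert this
        generalize g.left 0 * g.left 3 = z
        revert z; decide
    -- from h03 and hq derive q0 = q3 and q1 = q2
      revert h03 hq
      generalize g.left = q
      revert q; decide
    refine ⟨hS, ?_⟩
    have hT : (g.right : Perm (Fin 4)) ∈ T := (g.right).2
    have hall := blk_act hT
    rw [hpair.2] at hall
    simp only [add_zero] at hall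
    rw [mem_L_iff]
    revert hall
    generalize (g.right : Perm (Fin 4)) = τ
    revert τ; decide
  · rintro ⟨hS, hL⟩
    rw [mem_S_iff] at hS
    have h03 : g.left 0 * g.left 3 = 1 := by
      have := hS.1
      revert this
      generalize g.left 0 = a; generalize g.left 3 = b
      revert a b; decide
    have hblk : blk ((g.right : Perm (Fin 4)) 0) = 0 := by
      rw [mem_L_iff] at hL
      revert hL
      generalize (g.right : Perm (Fin 4)) = τ
      revert τ; decide
    show Multiplicative.ofAdd
        (Multiplicative.toAdd (g.left 0 * g.left 3),
          blk ((g.right : Perm (Fin 4)) 0)) = 1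
    rw [h03, hblk]
    rfl

def w1 : V := ![Multiplicative.ofAdd (1 : ZMod 2),
  Multiplicative.ofAdd (1 : ZMod 2), 1, 1]

lemma w1_Q : w1 ∈ Q := by rw [mem_Q_iff]; decide

lemma sigma2_T : swap (0 : Fin 4) 1 * swap 2 3 ∈ T :=
  Subgroup.subset_closure (by right; rfl)

def g1 : G := ⟨w1, 1⟩

def g2 : G := ⟨1, ⟨swap 0 1 * swap 2 3, sigma2_T⟩⟩

lemma g1_QT : g1 ∈ QT := w1_Q

lemma g2_QT : g2 ∈ QT := Q.one_mem

lemma f_surj : Function.Surjective f := by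
  have hf1 : f ⟨g1, g1_QT⟩ =
      Multiplicative.ofAdd ((1 : ZMod 2), (0 : ZMod 2)) := by
    show Multiplicative.ofAdd
      (Multiplicative.toAdd (g1.left 0 * g1.left 3),
        blk ((g1.right : Perm (Fin 4)) 0)) = _
    decide
  have hf2 : f ⟨g2, g2_QT⟩ =
      Multiplicative.ofAdd ((0 : ZMod 2), (1 : ZMod 2)) := by
    show Multiplicative.ofAdd
      (Multiplicative.toAdd (g2.left 0 * g2.left 3),
        blk ((g2.right : Perm (Fin 4)) 0)) = _
    decide
  intro y
  have hy : y = Multiplicative.ofAdd ((0:ZMod 2), (0:ZMod 2)) ∨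
      y = Multiplicative.ofAdd ((1:ZMod 2), (0:ZMod 2)) ∨
      y = Multiplicative.ofAdd ((0:ZMod 2), (1:ZMod 2)) ∨
      y = Multiplicative.ofAdd ((1:ZMod 2), (1:ZMod 2)) := by
    revert y; decide
  rcases hy with rfl | rfl | rfl | rfl
  · exact ⟨1, map_one f⟩
  · exact ⟨_, hf1⟩
  · exact ⟨_, hf2⟩
  · refine ⟨⟨g1, g1_QT⟩ * ⟨g2, g2_QT⟩, ?_⟩
    rw [map_mul, hf1, hf2]
    rfl

/-- The quotient group `R = (Q⋊T)/(S⋊L)` is isomorphic to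
the Klein four-group `ℤ/2ℤ × ℤ/2ℤ`.  (`S⋊L` is a normal subgroup of `Q⋊T`,
which is supplied as an instance so that the quotient is a group.) -/
theorem statement6 [h : (SL.subgroupOf QT).Normal] :
    Nonempty ((QT ⧸ SL.subgroupOf QT) ≃* Multiplicative (ZMod 2 × ZMod 2)) := by
  exact ⟨(QuotientGroup.quotientMulEquivOfEq ker_f.symm).trans
    (QuotientGroup.quotientKerEquivOfSurjective f f_surj)⟩

end CantorPaper
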